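/- Let k < n, let W : ℝⁿ → ℝᵏ be linear, b ∈ ℝᵏ, σ : ℝᵏ → ℝᵏ any function, and G : ℝᵏ → ℝ^d any function. Define Net(x) = G(σ(W x + b)). Then there exist disjoint closed sets 𝒳₁ = {x : ‖x‖ ≤ 0.9} and 𝒳₂ = {x : 1 ≤ ‖x‖ ≤ 2} in ℝⁿ such that Net(𝒳₁) ∩ Net(𝒳₂) ≠ ∅; hence no disjoint sets D₁, D₂ ⊆ ℝ^d satisfy Net(𝒳₁) ⊆ D₁ and Net(𝒳₂) ⊆ D₂. -/
import Mathlib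


theorem narrow_first_layer_cannot_separate {n k d : ℕ} (hkn : k < n)
    (W : EuclideanSpace ℝ (Fin n) →ₗ[ℝ] EuclideanSpace ℝ (Fin k))
    (b : EuclideanSpace ℝ (Fin k))
    (σ : EuclideanSpace ℝ (Fin k) → EuclideanSpace ℝ (Fin k))
    (G : EuclideanSpace ℝ (Fin k) → EuclideanSpace ℝ (Fin d)) :
    let Net : EuclideanSpace ℝ (Fin n) → EuclideanSpace ℝ (Fin d) :=
      fun x => G (σ (W x + b))
    let 𝒳₁ : Set (EuclideanSpace ℝ (Fin n)) := {x | ‖x‖ ≤ 0.9}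
    let 𝒳₂ : Set (EuclideanSpace ℝ (Fin n)) := {x | 1 ≤ ‖x‖ ∧ ‖x‖ ≤ 2}
    IsClosed 𝒳₁ ∧ IsClosed 𝒳₂ ∧ Disjoint 𝒳₁ 𝒳₂ ∧
    (Net '' 𝒳₁ ∩ Net '' 𝒳₂).Nonempty ∧
    ¬∃ D₁ D₂ : Set (EuclideanSpace ℝ (Fin d)),
      Disjoint D₁ D₂ ∧ Net '' 𝒳₁ ⊆ D₁ ∧ Net '' 𝒳₂ ⊆ D₂ := by
  intro Net 𝒳₁ 𝒳₂
  -- W is not injective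
  have hninj : ¬ Function.Injective W := by
    intro hinj
    have := LinearMap.finrank_le_finrank_of_injective hinj
    simp [finrank_euclideanSpace] at this
    omega
  rw [Function.not_injective_iff] at hninj
  obtain ⟨x, y, hxy, hne⟩ := hninj
  set u := x - y with hu
  have hu0 : u ≠ 0 := sub_ne_zero.mpr hne
  have hWu : W u = 0 := by simp [hu, map_sub, hxy]
  set v := ‖u‖⁻¹ • u with hv
  have hnu : ‖u‖ ≠ 0 := norm_ne_zero_iff.mpr hu0
  have hvnorm : ‖v‖ = 1 := by
    rw [hv, norm_smul, norm_inv, norm_norm, inv_mul_cancel₀ hnu]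
  have hWv : W v = 0 := by rw [hv, map_smul, hWu, smul_zero]
  have hc1 : IsClosed 𝒳₁ := isClosed_le continuous_norm continuous_const
  have hc2 : IsClosed 𝒳₂ := by
    exact IsClosed.inter (isClosed_le continuous_const continuous_norm)
      (isClosed_le continuous_norm continuous_const)
  have hdisj : Disjoint 𝒳₁ 𝒳₂ := by
    rw [Set.disjoint_left]
    intro a h1 h2
    have := h2.1
    simp only [𝒳₁, Set.mem_setOf_eq] at h1
    norm_num at h1
    linarith
  have h0mem : (0 : EuclideanSpace ℝ (Fin n)) ∈ 𝒳₁ := by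
    simp only [𝒳₁, Set.mem_setOf_eq, norm_zero]; norm_num
  have hvmem : v ∈ 𝒳₂ := by
    constructor <;> rw [hvnorm] <;> norm_num
  have hNet : Net 0 = Net v := by
    simp only [Net, map_zero, hWv]
  refine ⟨hc1, hc2, hdisj, ⟨Net 0, ⟨0, h0mem, rfl⟩, ⟨v, hvmem, hNet.symm⟩⟩, ?_⟩
  rintro ⟨D₁, D₂, hD, hs1, hs2⟩
  have h1 : Net 0 ∈ D₁ := hs1 ⟨0, h0mem, rfl⟩
  have h2 : Net 0 ∈ D₂ := hs2 ⟨v, hvmem, hNet.symm⟩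
  exact Set.disjoint_left.mp hD h1 h2
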